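/- If E is an FP-injective right R-module and N is a Ding injective right R-module, then Ext^i_R(E, N) = 0 for every i ≥ 1. -/

import Mathlib

/-! Preamble: basic notions of relative homological algebra over a
(possibly noncommutative) ring.  Right `R`-modules are modeled as
(left) modules over the opposite ring `Rᵐᵒᵖ`. -/

open CategoryTheory Opposite

noncomputable section

/-- The Ext group `Ext^n(A, B)` in the category of left `S`-modules,
computed as a derived functor (of `ℤ`-modules). -/
def extGroup (S : Type) [Ring S] (n : ℕ) (A B : ModuleCat.{0} S) : Type :=
  ((_root_.Ext ℤ (ModuleCat.{0} S) n).obj (op A)).obj B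

/-- Vanishing of the Ext group `Ext^n(A, B)`. -/
def extVanish (S : Type) [Ring S] (n : ℕ) (A B : ModuleCat.{0} S) : Prop :=
  Subsingleton (extGroup S n A B)

/-- A module `E` is FP-injective if `Ext¹(F, E) = 0` for every finitely
presented module `F`. -/
def FPInjective (S : Type) [Ring S] (E : ModuleCat.{0} S) : Prop :=
  ∀ F : ModuleCat.{0} S, Module.FinitePresentation S F → extVanish S 1 F E

/-- `E` satisfies the Ext-criterion for FP-injective dimension `≤ n`:
`Ext^{n+1}(F, E) = 0` for every finitely presented `F`. -/
def fpInjDimLE (S : Type) [Ring S] (E : ModuleCat.{0} S) (n : ℕ) : Prop :=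
  ∀ F : ModuleCat.{0} S, Module.FinitePresentation S F → extVanish S (n + 1) F E

/-- `E` has FP-injective dimension exactly `n` : `n` is the least natural number
with `Ext^{n+1}(F, E) = 0` for all finitely presented `F`. -/
def fpInjDimEq (S : Type) [Ring S] (E : ModuleCat.{0} S) (n : ℕ) : Prop :=
  fpInjDimLE S E n ∧ ∀ m : ℕ, fpInjDimLE S E m → n ≤ m

/-- `E` has finite FP-injective dimension. -/
def fpInjDimFinite (S : Type) [Ring S] (E : ModuleCat.{0} S) : Prop :=
  ∃ n : ℕ, fpInjDimLE S E n

/-- A ring `S` is left coherent if every finitely generated left ideal is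
finitely presented (as a left `S`-module). -/
def LeftCoherent (S : Type) [Ring S] : Prop :=
  ∀ I : Submodule S S, I.FG → Module.FinitePresentation S I

/-- A ring `S` is right coherent if its opposite ring is left coherent. -/
def RightCoherent (S : Type) [Ring S] : Prop :=
  LeftCoherent Sᵐᵒᵖ

section BTensor

variable (R : Type) [Ring R]

/-- The subgroup of `A ⊗_ℤ B` by which one quotients to obtain the balanced
tensor product `A ⊗_R B` of a right `R`-module `A` and a left `R`-module `B`. -/
def btRel (A : Type) [AddCommGroup A] [Module Rᵐᵒᵖ A]
    (B : Type) [AddCommGroup B] [Module R B] :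
    Submodule ℤ (TensorProduct ℤ A B) :=
  Submodule.span ℤ
    {x | ∃ (a : A) (r : R) (b : B),
      x = (MulOpposite.op r • a) ⊗ₜ[ℤ] b - a ⊗ₜ[ℤ] (r • b)}

/-- The balanced tensor product `A ⊗_R B` of a right `R`-module `A` and a left
`R`-module `B`, defined as a quotient of `A ⊗_ℤ B`. -/
abbrev BTensor (A : Type) [AddCommGroup A] [Module Rᵐᵒᵖ A]
    (B : Type) [AddCommGroup B] [Module R B] : Type :=
  TensorProduct ℤ A B ⧸ btRel R A B

variable {A A' : Type} [AddCommGroup A] [Module Rᵐᵒᵖ A] [AddCommGroup A'] [Module Rᵐᵒᵖ A']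
variable {B B' : Type} [AddCommGroup B] [Module R B] [AddCommGroup B'] [Module R B']

/-- The map `A ⊗_R B → A ⊗_R B'` induced by a map `f : B → B'` of left
`R`-modules. -/
def BTensor.lmap (f : B →ₗ[R] B') (A : Type) [AddCommGroup A] [Module Rᵐᵒᵖ A] :
    BTensor R A B →ₗ[ℤ] BTensor R A B' :=
  Submodule.mapQ (btRel R A B) (btRel R A B')
    (TensorProduct.map LinearMap.id f.toAddMonoidHom.toIntLinearMap)
    (by
      rw [btRel, Submodule.span_le]
      rintro x ⟨a, r, b, rfl⟩
      simp only [SetLike.mem_coe, Submodule.mem_comap, map_sub, TensorProduct.map_tmul,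
        LinearMap.id_apply, AddMonoidHom.coe_toIntLinearMap, LinearMap.toAddMonoidHom_coe,
        map_smul]
      exact Submodule.subset_span ⟨a, r, f b, by first | (erw [map_sub, TensorProduct.map_tmul, TensorProduct.map_tmul]; simp) | (erw [map_sub, TensorProduct.map_tmul, TensorProduct.map_tmul]; rfl) | (erw [map_sub, TensorProduct.map_tmul, TensorProduct.map_tmul]; simp only [LinearMap.id_apply, AddMonoidHom.coe_toIntLinearMap, LinearMap.toAddMonoidHom_coe, map_smul])⟩)

/-- The map `A ⊗_R B → A' ⊗_R B` induced by a map `g : A → A'` of right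
`R`-modules. -/
def BTensor.rmap (g : A →ₗ[Rᵐᵒᵖ] A') (B : Type) [AddCommGroup B] [Module R B] :
    BTensor R A B →ₗ[ℤ] BTensor R A' B :=
  Submodule.mapQ (btRel R A B) (btRel R A' B)
    (TensorProduct.map g.toAddMonoidHom.toIntLinearMap LinearMap.id)
    (by
      rw [btRel, Submodule.span_le]
      rintro x ⟨a, r, b, rfl⟩
      simp only [SetLike.mem_coe, Submodule.mem_comap, map_sub, TensorProduct.map_tmul,
        LinearMap.id_apply, AddMonoidHom.coe_toIntLinearMap, LinearMap.toAddMonoidHom_coe,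
        map_smul]
      exact Submodule.subset_span ⟨g a, r, b, by first | (erw [map_sub, TensorProduct.map_tmul, TensorProduct.map_tmul]; simp) | (erw [map_sub, TensorProduct.map_tmul, TensorProduct.map_tmul]; rfl) | (erw [map_sub, TensorProduct.map_tmul, TensorProduct.map_tmul]; simp only [LinearMap.id_apply, AddMonoidHom.coe_toIntLinearMap, LinearMap.toAddMonoidHom_coe, map_smul])⟩)

/-- A right `R`-module `A` is flat if the functor `A ⊗_R —` preserves
injectivity of maps of left `R`-modules. -/
def FlatRight (A : ModuleCat.{0} Rᵐᵒᵖ) : Prop :=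
  ∀ (B B' : ModuleCat.{0} R) (f : B →ₗ[R] B'),
    Function.Injective f → Function.Injective (BTensor.lmap R f A)

/-- A left `R`-module `B` is flat if the functor `— ⊗_R B` preserves
injectivity of maps of right `R`-modules. -/
def FlatLeft (B : ModuleCat.{0} R) : Prop :=
  ∀ (A A' : ModuleCat.{0} Rᵐᵒᵖ) (g : A →ₗ[Rᵐᵒᵖ] A'),
    Function.Injective g → Function.Injective (BTensor.rmap R g B)

end BTensor

/-- A module `N` is Ding injective if there is a doubly infinite exact sequence
of injective modules, with `N` as one of the kernels, which stays exact after
applying `Hom(E, —)` for every FP-injective module `E`. -/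
def DingInjective (S : Type) [Ring S] (N : ModuleCat.{0} S) : Prop :=
  ∃ (I : ℤ → ModuleCat.{0} S) (d : ∀ n : ℤ, I n →ₗ[S] I (n + 1)),
    (∀ n, Module.Injective S (I n)) ∧
    (∀ n, Function.Exact (d n) (d (n + 1))) ∧
    Nonempty (N ≃ₗ[S] LinearMap.ker (d 0)) ∧
    (∀ E : ModuleCat.{0} S, FPInjective S E → ∀ n : ℤ,
      Function.Exact (fun g : E →ₗ[S] I n => (d n).comp g)
        (fun g : E →ₗ[S] I (n + 1) => (d (n + 1)).comp g))

/-- A right `R`-module `M` is Ding projective if there is a doubly infinite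
exact sequence of projective right modules, with `M` as one of the kernels,
which stays exact after applying `Hom(—, F)` for every flat right module `F`. -/
def DingProjective (R : Type) [Ring R] (M : ModuleCat.{0} Rᵐᵒᵖ) : Prop :=
  ∃ (P : ℤ → ModuleCat.{0} Rᵐᵒᵖ) (d : ∀ n : ℤ, P n →ₗ[Rᵐᵒᵖ] P (n + 1)),
    (∀ n, Module.Projective Rᵐᵒᵖ (P n)) ∧
    (∀ n, Function.Exact (d n) (d (n + 1))) ∧
    Nonempty (M ≃ₗ[Rᵐᵒᵖ] LinearMap.ker (d 0)) ∧
    (∀ F : ModuleCat.{0} Rᵐᵒᵖ, FlatRight R F → ∀ n : ℤ,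
      Function.Exact (fun g : P (n + 1 + 1) →ₗ[Rᵐᵒᵖ] F => g.comp (d (n + 1)))
        (fun g : P (n + 1) →ₗ[Rᵐᵒᵖ] F => g.comp (d n)))

/-- A right `R`-module `M` is Ding flat if there is a doubly infinite exact
sequence of flat right modules, with `M` as one of the kernels, which stays
exact after applying `— ⊗_R E` for every FP-injective left module `E`. -/
def DingFlat (R : Type) [Ring R] (M : ModuleCat.{0} Rᵐᵒᵖ) : Prop :=
  ∃ (F : ℤ → ModuleCat.{0} Rᵐᵒᵖ) (d : ∀ n : ℤ, F n →ₗ[Rᵐᵒᵖ] F (n + 1)),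
    (∀ n, FlatRight R (F n)) ∧
    (∀ n, Function.Exact (d n) (d (n + 1))) ∧
    Nonempty (M ≃ₗ[Rᵐᵒᵖ] LinearMap.ker (d 0)) ∧
    (∀ E : ModuleCat.{0} R, FPInjective R E → ∀ n : ℤ,
      Function.Exact (BTensor.rmap R (d n) E) (BTensor.rmap R (d (n + 1)) E))

/-- A left `R`-module `M` is Gorenstein flat if there is a doubly infinite
exact sequence of flat left modules, with `M` as one of the kernels, which
stays exact after applying `E ⊗_R —` for every injective right module `E`. -/
def GorensteinFlat (R : Type) [Ring R] (M : ModuleCat.{0} R) : Prop :=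
  ∃ (F : ℤ → ModuleCat.{0} R) (d : ∀ n : ℤ, F n →ₗ[R] F (n + 1)),
    (∀ n, FlatLeft R (F n)) ∧
    (∀ n, Function.Exact (d n) (d (n + 1))) ∧
    Nonempty (M ≃ₗ[R] LinearMap.ker (d 0)) ∧
    (∀ E : ModuleCat.{0} Rᵐᵒᵖ, Module.Injective Rᵐᵒᵖ E → ∀ n : ℤ,
      Function.Exact (BTensor.lmap R (d n) E) (BTensor.lmap R (d (n + 1)) E))

/-- A right `R`-module `M` has flat dimension `≤ n` : there is an exact
resolution `0 → F_n → ⋯ → F_0 → M → 0` by flat right modules (encoded as an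
`ℕ`-indexed resolution which vanishes beyond degree `n`). -/
def flatDimLE (R : Type) [Ring R] (M : ModuleCat.{0} Rᵐᵒᵖ) (n : ℕ) : Prop :=
  ∃ (F : ℕ → ModuleCat.{0} Rᵐᵒᵖ) (d : ∀ k : ℕ, F (k + 1) →ₗ[Rᵐᵒᵖ] F k)
    (ε : F 0 →ₗ[Rᵐᵒᵖ] M),
    (∀ k, FlatRight R (F k)) ∧
    Function.Surjective ε ∧
    Function.Exact (d 0) ε ∧
    (∀ k, Function.Exact (d (k + 1)) (d k)) ∧
    (∀ k, n < k → Subsingleton (F k))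

/-- A right `R`-module has finite flat dimension. -/
def flatDimFinite (R : Type) [Ring R] (M : ModuleCat.{0} Rᵐᵒᵖ) : Prop :=
  ∃ n : ℕ, flatDimLE R M n

/-- A ring `R` is an `n`-FC ring if it is left and right coherent and has left
and right self FP-injective dimension equal to `n`. -/
def IsFCRing (R : Type) [Ring R] (n : ℕ) : Prop :=
  LeftCoherent R ∧ RightCoherent R ∧
    fpInjDimEq R (ModuleCat.of R R) n ∧
    fpInjDimEq Rᵐᵒᵖ (ModuleCat.of Rᵐᵒᵖ Rᵐᵒᵖ) n

/-- A ring is Ding-Chen if it is an `n`-FC ring for some `n`. -/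
def IsDingChen (R : Type) [Ring R] : Prop :=
  ∃ n : ℕ, IsFCRing R n

end

section Helpers
variable {S : Type} [Ring S]

lemma extend_inj {A B C Q : Type} [AddCommGroup A] [Module S A] [AddCommGroup B] [Module S B]
    [AddCommGroup C] [Module S C] [AddCommGroup Q] [Module S Q]
    (hQ : Module.Injective S Q) {u : A →ₗ[S] B} {v : B →ₗ[S] C}
    (hex : Function.Exact u v) (φ : B →ₗ[S] Q) (hφ : ∀ a, φ (u a) = 0) :
    ∃ ψ : C →ₗ[S] Q, ∀ b, ψ (v b) = φ b := by
  have hker : LinearMap.ker v ≤ LinearMap.ker φ := by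
    intro b hb
    obtain ⟨a, rfl⟩ := (hex b).mp (LinearMap.mem_ker.mp hb)
    exact hφ a
  obtain ⟨ψ, hψ⟩ := hQ.out (LinearMap.range v).subtype (Submodule.injective_subtype _)
    ((Submodule.liftQ (LinearMap.ker v) φ hker) ∘ₗ v.quotKerEquivRange.symm.toLinearMap)
  refine ⟨ψ, fun b => ?_⟩
  have h1 := hψ ⟨v b, LinearMap.mem_range_self v b⟩
  have h2 : v.quotKerEquivRange.symm ⟨v b, LinearMap.mem_range_self v b⟩ =
      Submodule.Quotient.mk b := by
    rw [LinearEquiv.symm_apply_eq]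
    ext
    exact (LinearMap.quotKerEquivRange_apply_mk v b).symm
  simpa [h2] using h1

lemma factor_surj {B E Q : Type} [AddCommGroup B] [Module S B] [AddCommGroup E] [Module S E]
    [AddCommGroup Q] [Module S Q] (ε : B →ₗ[S] E) (hε : Function.Surjective ε)
    (φ : B →ₗ[S] Q) (hker : LinearMap.ker ε ≤ LinearMap.ker φ) :
    ∃ φ' : E →ₗ[S] Q, ∀ b, φ' (ε b) = φ b := by
  refine ⟨(Submodule.liftQ (LinearMap.ker ε) φ hker) ∘ₗ
    (LinearMap.quotKerEquivOfSurjective ε hε).symm.toLinearMap, fun b => ?_⟩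
  have h2 : (LinearMap.quotKerEquivOfSurjective ε hε).symm (ε b) = Submodule.Quotient.mk b := by
    rw [LinearEquiv.symm_apply_eq]
    rfl
  simp [h2]

lemma lift_proj {P A B : Type} [AddCommGroup P] [Module S P] [AddCommGroup A] [Module S A]
    [AddCommGroup B] [Module S B] (hP : Module.Projective S P) (w : A →ₗ[S] B)
    (φ : P →ₗ[S] B) (hφ : ∀ x, φ x ∈ LinearMap.range w) :
    ∃ h : P →ₗ[S] A, ∀ x, w (h x) = φ x := by
  haveI := hP
  obtain ⟨h, hh⟩ := Module.projective_lifting_property w.rangeRestrict (φ.codRestrict _ hφ)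
    w.surjective_rangeRestrict
  exact ⟨h, fun x => congrArg Subtype.val (LinearMap.congr_fun hh x)⟩

end Helpers

/-- The main lifting lemma: maps from a projective resolution of a module `E`
into a kernel of a Ding-type exact complex of injectives extend. -/
lemma ding_lift (S : Type) [Ring S] (E : ModuleCat.{0} S) (P : ProjectiveResolution E)
    (I : ℤ → ModuleCat.{0} S) (d : ∀ n : ℤ, I n →ₗ[S] I (n + 1))
    (hinj : ∀ n, Module.Injective S (I n))
    (hex : ∀ n, Function.Exact (d n) (d (n + 1)))
    (hding : ∀ n : ℤ,
      Function.Exact (fun g : E →ₗ[S] I n => (d n).comp g)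
        (fun g : E →ₗ[S] I (n + 1) => (d (n + 1)).comp g)) :
    ∀ (m : ℕ) (j : ℤ) (f : P.complex.X (m + 1) →ₗ[S] LinearMap.ker (d j)),
      f ∘ₗ (P.complex.d (m + 2) (m + 1)).hom = 0 →
      ∃ g : P.complex.X m →ₗ[S] LinearMap.ker (d j),
        g ∘ₗ (P.complex.d (m + 1) m).hom = f := by
  have hPex : ∀ m : ℕ, Function.Exact
      (P.complex.d (m + 2) (m + 1)).hom
      (P.complex.d (m + 1) m).hom := by
    intro m
    have h := P.exact_succ m
    rw [ShortComplex.moduleCat_exact_iff] at h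
    intro b
    exact ⟨fun hb => h b hb, by
      rintro ⟨a, rfl⟩
      exact LinearMap.congr_fun (congrArg ModuleCat.Hom.hom (P.complex.d_comp_d (m + 2) (m + 1) m)) a⟩
  have hdd0 : ∀ n : ℤ, ∀ x : I n, d (n + 1) (d n x) = 0 := fun n x =>
    (hex n (d n x)).mpr ⟨x, rfl⟩
  intro m
  induction m with
  | zero =>
    intro j f hf
    obtain ⟨G, hG⟩ := extend_inj (hinj j) (hPex 0)
      ((LinearMap.ker (d j)).subtype ∘ₗ f)
      (fun a => by
        have := LinearMap.congr_fun hf a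
        simp only [LinearMap.comp_apply, LinearMap.zero_apply] at this ⊢
        rw [this]; exact map_zero _)
    -- G : P.X 0 →ₗ I j, G (d₁₀ b) = ↑(f b)
    have hεs : Function.Surjective (P.π.f 0).hom :=
      (ModuleCat.epi_iff_surjective _).1 inferInstance
    have hP0 : Function.Exact (P.complex.d 1 0).hom
        (P.π.f 0).hom := by
      have h := P.exact₀
      rw [ShortComplex.moduleCat_exact_iff] at h
      intro b
      exact ⟨fun hb => h b hb, by
        rintro ⟨a, rfl⟩
        exact LinearMap.congr_fun (congrArg ModuleCat.Hom.hom P.complex_d_comp_π_f_zero) a⟩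
    obtain ⟨φ, hφ⟩ := factor_surj (P.π.f 0).hom hεs ((d j) ∘ₗ G)
      (by
        intro x hx
        obtain ⟨b, rfl⟩ := (hP0 x).mp (LinearMap.mem_ker.mp hx)
        have : G ((P.complex.d 1 0).hom b) = ((f b : I j)) :=
          hG b
        simp only [LinearMap.mem_ker, LinearMap.comp_apply, this]
        exact LinearMap.mem_ker.mp (f b).2)
    have hφ0 : (d (j + 1)).comp φ = 0 := by
      apply LinearMap.ext
      intro x
      obtain ⟨b, rfl⟩ := hεs x
      simp only [LinearMap.comp_apply, LinearMap.zero_apply, hφ b]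
      exact hdd0 j (G b)
    obtain ⟨ψ, hψ⟩ := (hding j φ).mp hφ0
    set G' : P.complex.X 0 →ₗ[S] I j := G - ψ ∘ₗ (P.π.f 0).hom with hG'
    have hG'0 : ∀ x, G' x ∈ LinearMap.ker (d j) := by
      intro x
      rw [LinearMap.mem_ker]
      have hx : G' x = G x - ψ ((P.π.f 0).hom x) := rfl
      have h1 : d j (ψ ((P.π.f 0).hom x)) =
          φ ((P.π.f 0).hom x) := LinearMap.congr_fun hψ _
      have h2 : φ ((P.π.f 0).hom x) = d j (G x) := hφ x
      rw [hx, map_sub, h1, h2, sub_self]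
    refine ⟨LinearMap.codRestrict _ G' hG'0, ?_⟩
    apply LinearMap.ext
    intro b
    apply Subtype.ext
    simp only [LinearMap.comp_apply, LinearMap.codRestrict_apply]
    have hx : G' ((P.complex.d (0 + 1) 0).hom b) =
        G ((P.complex.d (0 + 1) 0).hom b) -
          ψ ((P.π.f 0).hom
            ((P.complex.d (0 + 1) 0).hom b)) := rfl
    have hε0 : (P.π.f 0).hom
        ((P.complex.d (0 + 1) 0).hom b) = (0 : E) :=
      LinearMap.congr_fun (congrArg ModuleCat.Hom.hom P.complex_d_comp_π_f_zero) b
    have hGb : G ((P.complex.d (0 + 1) 0).hom b) =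
        ((f b : I j)) := hG b
    rw [hx, hε0, map_zero, sub_zero, hGb]
  | succ m ih =>
    intro j f hf
    obtain ⟨G, hG⟩ := extend_inj (hinj j) (hPex (m + 1))
      ((LinearMap.ker (d j)).subtype ∘ₗ f)
      (fun a => by
        have := LinearMap.congr_fun hf a
        simp only [LinearMap.comp_apply, LinearMap.zero_apply] at this ⊢
        rw [this]; exact map_zero _)
    -- G : P.X (m+1) →ₗ I j, G (d b) = ↑(f b)
    set f' : P.complex.X (m + 1) →ₗ[S] LinearMap.ker (d (j + 1)) :=
      LinearMap.codRestrict _ ((d j) ∘ₗ G)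
        (fun x => LinearMap.mem_ker.mpr (hdd0 j (G x))) with hf'def
    have hf' : f' ∘ₗ (P.complex.d (m + 2) (m + 1)).hom = 0 := by
      apply LinearMap.ext
      intro b
      apply Subtype.ext
      simp only [LinearMap.comp_apply, hf'def, LinearMap.codRestrict_apply, LinearMap.zero_apply,
        Submodule.coe_zero, hG b]
      exact LinearMap.mem_ker.mp (f b).2
    obtain ⟨g', hg'⟩ := ih (j + 1) f' hf'
    have hPm : Module.Projective S (P.complex.X m) :=
      (IsProjective.iff_projective _).mpr (P.projective m)
    obtain ⟨h, hh⟩ := lift_proj hPm (d j) ((LinearMap.ker (d (j + 1))).subtype ∘ₗ g')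
      (fun x => by
        have h2 : d (j + 1) ((g' x : I (j + 1))) = 0 := LinearMap.mem_ker.mp (g' x).2
        obtain ⟨a, ha⟩ := (hex j _).mp h2
        exact ⟨a, ha⟩)
    set G' : P.complex.X (m + 1) →ₗ[S] I j :=
      G - h ∘ₗ (P.complex.d (m + 1) m).hom with hG'
    have hG'0 : ∀ x, G' x ∈ LinearMap.ker (d j) := by
      intro x
      rw [LinearMap.mem_ker]
      have hx : G' x = G x -
          h ((P.complex.d (m + 1) m).hom x) := rfl
      have h1 : d j (h ((P.complex.d (m + 1) m).hom x)) =
          (g' ((P.complex.d (m + 1) m).hom x) :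
            I (j + 1)) := hh _
      have h2 : (g' ((P.complex.d (m + 1) m).hom x) :
          I (j + 1)) = (f' x : I (j + 1)) :=
        congrArg Subtype.val (LinearMap.congr_fun hg' x)
      have h3 : (f' x : I (j + 1)) = d j (G x) := rfl
      rw [hx, map_sub, h1, h2, h3, sub_self]
    refine ⟨LinearMap.codRestrict _ G' hG'0, ?_⟩
    apply LinearMap.ext
    intro b
    apply Subtype.ext
    simp only [LinearMap.comp_apply, LinearMap.codRestrict_apply]
    have hx : G' ((P.complex.d (m + 1 + 1) (m + 1)).hom b) =
        G ((P.complex.d (m + 1 + 1) (m + 1)).hom b) -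
          h ((P.complex.d (m + 1) m).hom
            ((P.complex.d (m + 1 + 1) (m + 1)).hom b)) := rfl
    have hdd : (P.complex.d (m + 1) m).hom
        ((P.complex.d (m + 1 + 1) (m + 1)).hom b) = 0 :=
      LinearMap.congr_fun (congrArg ModuleCat.Hom.hom (P.complex.d_comp_d (m + 2) (m + 1) m)) b
    have hGb : G ((P.complex.d (m + 1 + 1) (m + 1)).hom b) = ((f b : I j)) := hG b
    rw [hx, hdd, map_zero, sub_zero, hGb]

/-- If `E` is FP-injective and `N` is Ding injective, then
`Ext^i(E, N) = 0` for all `i ≥ 1`. -/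
theorem statement2 (R : Type) [Ring R] (E N : ModuleCat.{0} Rᵐᵒᵖ)
    (hE : FPInjective Rᵐᵒᵖ E) (hN : DingInjective Rᵐᵒᵖ N) :
    ∀ i : ℕ, 1 ≤ i → extVanish Rᵐᵒᵖ i E N := by
  obtain ⟨I, d, hinj, hexd, ⟨e⟩, hding⟩ := hN
  intro i hi
  obtain ⟨n, rfl⟩ : ∃ n : ℕ, i = n + 1 := ⟨i - 1, (Nat.succ_pred_eq_of_pos hi).symm⟩
  let P : ProjectiveResolution E := ProjectiveResolution.of E
  have key := ding_lift Rᵐᵒᵖ E P I d hinj hexd (hding E hE)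
  have hz : Limits.IsZero ((P.complex.linearYonedaObj ℤ N).homology (n + 1)) := by
    rw [← HomologicalComplex.exactAt_iff_isZero_homology]
    rw [HomologicalComplex.exactAt_iff' _ n (n + 1) (n + 2) (by simp) (by simp)]
    rw [ShortComplex.moduleCat_exact_iff]
    intro f hf
    let f' : P.complex.X (n + 1) →ₗ[Rᵐᵒᵖ] N := ModuleCat.Hom.hom (R := Rᵐᵒᵖ) f
    have hff : f = (ModuleCat.ofHom f') := rfl
    have h1 : (P.complex.d (n + 2) (n + 1) ≫ (ModuleCat.ofHom f')) = 0 := hf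
    have hf' : ((e.toLinearMap : N →ₗ[Rᵐᵒᵖ] LinearMap.ker (d 0)) ∘ₗ
        f') ∘ₗ
        (P.complex.d (n + 2) (n + 1)).hom = 0 := by
      apply LinearMap.ext
      intro x
      have h0 : f'
          ((P.complex.d (n + 2) (n + 1)).hom x) = 0 :=
        LinearMap.congr_fun (congrArg ModuleCat.Hom.hom h1) x
      simp only [LinearMap.comp_apply, h0, map_zero, LinearMap.zero_apply]
    obtain ⟨g, hg⟩ := key n 0 (e.toLinearMap ∘ₗ f') hf'
    refine ⟨(ModuleCat.ofHom (e.symm.toLinearMap ∘ₗ g : P.complex.X n →ₗ[Rᵐᵒᵖ] N)), ?_⟩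
    rw [hff]
    show (P.complex.d (n + 1) n ≫ (ModuleCat.ofHom (e.symm.toLinearMap ∘ₗ g :
      P.complex.X n →ₗ[Rᵐᵒᵖ] N))) = (ModuleCat.ofHom f')
    apply ModuleCat.hom_ext
    apply LinearMap.ext
    intro x
    have h2 : g ((P.complex.d (n + 1) n).hom x) =
        e (f' x) := LinearMap.congr_fun hg x
    show e.symm (g ((P.complex.d (n + 1) n).hom x)) =
      f' x
    rw [h2, LinearEquiv.symm_apply_apply]
  haveI hsub : Subsingleton ((P.complex.linearYonedaObj ℤ N).homology (n + 1)) := by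
    have h0 : (𝟙 ((P.complex.linearYonedaObj ℤ N).homology (n + 1))) = 0 := hz.eq_of_src _ _
    refine ⟨fun x y => ?_⟩
    have hx : x = (0 : ((P.complex.linearYonedaObj ℤ N).homology (n + 1) : Type)) := by
      simpa using ConcreteCategory.congr_hom h0 x
    have hy : y = (0 : ((P.complex.linearYonedaObj ℤ N).homology (n + 1) : Type)) := by
      simpa using ConcreteCategory.congr_hom h0 y
    rw [hx, hy]
  have iso := P.isoExt (R := ℤ) (n + 1) N
  refine ⟨fun a b => ?_⟩
  have h1 : iso.hom a = iso.hom b := Subsingleton.elim _ _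
  have h2 : iso.inv (iso.hom a) = a := ConcreteCategory.congr_hom iso.hom_inv_id a
  have h3 : iso.inv (iso.hom b) = b := ConcreteCategory.congr_hom iso.hom_inv_id b
  rw [← h2, ← h3, h1]
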